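/- Let Ω ⊂ ℝ^d be a measurable set, let f(x) = 1{x ∈ Ω}, let X ~ N(0, I_d), and suppose μ = Pr(X ∈ Ω) satisfies 0 < μ < 1. Then the mean dimension of f satisfies ν(f) = Σ_{j=1}^d E[ Pr(X ∈ Ω | X_{−j}) · Pr(X ∈ Ω^c | X_{−j}) ] / (μ(1 − μ)), where the outer expectations are over the conditioning variables X_{−j} = (X_k)_{k≠j}. -/

import Mathlib

open MeasureTheory ProbabilityTheory Real Filter

noncomputable section

/-- Standard Gaussian measure `N(0, I_d)` on `ℝ^d`. -/
def stdGaussian (d : ℕ) : Measure (Fin d → ℝ) :=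
  Measure.pi fun _ => gaussianReal 0 1

/-- Sobol' total index `τ̄²_j(f) = (1/2)·E[(f(X) − f(X_{−j}:Z_j))²]`. -/
def sobolTau (d : ℕ) (f : (Fin d → ℝ) → ℝ) (j : Fin d) : ℝ :=
  (1 / 2) * ∫ p : (Fin d → ℝ) × (Fin d → ℝ),
    (f p.1 - f (Function.update p.1 j (p.2 j))) ^ 2
      ∂((stdGaussian d).prod (stdGaussian d))

/-- Mean dimension `ν(f) = (Σ_j τ̄²_j(f)) / Var(f(X))`. -/
def meanDim (d : ℕ) (f : (Fin d → ℝ) → ℝ) : ℝ :=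
  (∑ j, sobolTau d f j) / variance f (stdGaussian d)

/-- Gaussian fractional absolute moment `M_η = 2^{η/2} Γ((η+1)/2) / √π`. -/
def Mmom (η : ℝ) : ℝ := 2 ^ (η / 2) / Real.sqrt π * Real.Gamma ((η + 1) / 2)

/-- Standard normal CDF `Φ`. -/
def Phi (t : ℝ) : ℝ := ((gaussianReal 0 1) (Set.Iic t)).toReal

/-- Standard normal density `φ`. -/
def gpdf (x : ℝ) : ℝ := Real.exp (-x ^ 2 / 2) / Real.sqrt (2 * π)


instance (d : ℕ) : IsProbabilityMeasure (stdGaussian d) := by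
  unfold _root_.stdGaussian; infer_instance

lemma integrable_of_bdd {α : Type*} [MeasurableSpace α] {ν : Measure α} [IsFiniteMeasure ν]
    {F : α → ℝ} (hm : AEStronglyMeasurable F ν) (hb : ∀ x, ‖F x‖ ≤ 1) : Integrable F ν :=
  Integrable.mono' (integrable_const 1) hm (Filter.Eventually.of_forall hb)

lemma map_update (d : ℕ) (j : Fin d) :
    Measure.map (fun p : (Fin d → ℝ) × ℝ => Function.update p.1 j p.2)
      ((stdGaussian d).prod (gaussianReal 0 1)) = stdGaussian d := by
  classical
  have hT : Measurable fun p : (Fin d → ℝ) × ℝ => Function.update p.1 j p.2 :=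
    measurable_update'
  unfold _root_.stdGaussian
  refine (Measure.pi_eq fun s hs => ?_).symm
  rw [Measure.map_apply hT (MeasurableSet.univ_pi fun i => hs i)]
  have hpre : (fun p : (Fin d → ℝ) × ℝ => Function.update p.1 j p.2) ⁻¹' Set.pi Set.univ s
      = (Set.pi Set.univ (Function.update s j Set.univ)) ×ˢ s j := by
    ext ⟨x, t⟩
    simp only [Set.mem_preimage, Set.mem_pi, Set.mem_univ, true_implies, Set.mem_prod]
    constructor
    · intro h
      refine ⟨fun i => ?_, by simpa using h j⟩
      rcases eq_or_ne i j with rfl | hij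
      · simp
      · simpa [Function.update_of_ne hij] using h i
    · rintro ⟨h1, h2⟩ i
      rcases eq_or_ne i j with rfl | hij
      · simpa using h2
      · simpa [Function.update_of_ne hij] using h1 i
  rw [hpre, Measure.prod_prod, Measure.pi_pi]
  have h1 : ∀ i, (gaussianReal 0 1) (Function.update s j Set.univ i)
      = Function.update (fun i => (gaussianReal 0 1) (s i)) j 1 i := by
    intro i
    rcases eq_or_ne i j with rfl | hij
    · simp
    · simp [Function.update_of_ne hij]
  simp_rw [h1]
  rw [Finset.prod_update_of_mem (Finset.mem_univ j), one_mul, mul_comm,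
    ← Finset.mul_prod_erase Finset.univ _ (Finset.mem_univ j), Finset.erase_eq]

lemma integral_update_eq (d : ℕ) (j : Fin d) (F : (Fin d → ℝ) → ℝ)
    (hF : Integrable F (stdGaussian d)) :
    ∫ x, F x ∂(stdGaussian d)
      = ∫ x, ∫ t, F (Function.update x j t) ∂(gaussianReal 0 1) ∂(stdGaussian d) := by
  have hT : Measurable fun p : (Fin d → ℝ) × ℝ => Function.update p.1 j p.2 :=
    measurable_update'
  rw [← map_update d j] at hF
  have h1 : Integrable (fun p : (Fin d → ℝ) × ℝ => F (Function.update p.1 j p.2))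
      ((stdGaussian d).prod (gaussianReal 0 1)) :=
    (integrable_map_measure hF.aestronglyMeasurable hT.aemeasurable).mp hF
  calc ∫ x, F x ∂(stdGaussian d)
      = ∫ p : (Fin d → ℝ) × ℝ, F (Function.update p.1 j p.2)
          ∂((stdGaussian d).prod (gaussianReal 0 1)) := by
        conv_lhs => rw [← map_update d j]
        exact integral_map hT.aemeasurable hF.aestronglyMeasurable
    _ = _ := integral_prod _ h1


/-- Equation (4.5): mean dimension of an indicator function. Here
`Pr(X ∈ Ω | X_{−j})` is written as the Gaussian integral over the `j`-th
coordinate of the indicator of `Ω`, and similarly for `Ω^c`. -/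
theorem stmt9 (d : ℕ) (Ω : Set (Fin d → ℝ)) (hΩ : MeasurableSet Ω)
    (f : (Fin d → ℝ) → ℝ) (hf : ∀ x, f x = Ω.indicator (fun _ => (1 : ℝ)) x)
    (μ0 : ℝ) (hμ0 : μ0 = ((stdGaussian d) Ω).toReal)
    (h0 : 0 < μ0) (h1 : μ0 < 1) :
    meanDim d f =
      (∑ j, ∫ x,
        (∫ z, Ω.indicator (fun _ => (1 : ℝ)) (Function.update x j z)
            ∂(gaussianReal 0 1))
        * (∫ z, Ωᶜ.indicator (fun _ => (1 : ℝ)) (Function.update x j z)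
            ∂(gaussianReal 0 1))
        ∂(stdGaussian d)) / (μ0 * (1 - μ0)) := by
  classical
  have hf' : f = Ω.indicator (fun _ => (1 : ℝ)) := funext hf
  subst hf'
  set γ : Measure ℝ := gaussianReal 0 1 with hγ
  set ν : Measure (Fin d → ℝ) := stdGaussian d with hν
  set ind : (Fin d → ℝ) → ℝ := Ω.indicator (fun _ => (1 : ℝ)) with hind
  have hmf : Measurable ind := measurable_const.indicator hΩ
  have hbf : ∀ x, ‖ind x‖ ≤ 1 := by
    intro x; by_cases hx : x ∈ Ω <;> simp [ind, hx]
  have hIndInt : Integrable ind ν := integrable_of_bdd hmf.aestronglyMeasurable hbf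
  set g : Fin d → (Fin d → ℝ) → ℝ :=
    fun j x => ∫ t, ind (Function.update x j t) ∂γ with hgdef
  -- measurability of g
  have hgm : ∀ j, Measurable (g j) := by
    intro j
    have : StronglyMeasurable fun p : (Fin d → ℝ) × ℝ =>
        ind (Function.update p.1 j p.2) :=
      (hmf.comp measurable_update').stronglyMeasurable
    exact this.integral_prod_right'.measurable
  have hIndIntγ : ∀ j (x : Fin d → ℝ),
      Integrable (fun t => ind (Function.update x j t)) γ := by
    intro j x
    exact integrable_of_bdd ((hmf.comp (measurable_update x)).aestronglyMeasurable)
      (fun t => hbf _)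
  have hg0 : ∀ j x, 0 ≤ g j x := fun j x =>
    integral_nonneg fun t => Set.indicator_nonneg (fun _ _ => zero_le_one) _
  have hg1 : ∀ j x, g j x ≤ 1 := by
    intro j x
    calc g j x ≤ ∫ _t, (1 : ℝ) ∂γ := by
          refine integral_mono (hIndIntγ j x) (integrable_const 1) fun t => ?_
          have := hbf (Function.update x j t)
          simpa [abs_le] using (abs_le.mp (by simpa using this)).2
      _ = 1 := by simp
  have hbg : ∀ j x, ‖g j x‖ ≤ 1 := by
    intro j x
    rw [Real.norm_eq_abs, abs_of_nonneg (hg0 j x)]; exact hg1 j x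
  have hgInt : ∀ j, Integrable (g j) ν :=
    fun j => integrable_of_bdd (hgm j).aestronglyMeasurable (hbg j)
  -- ∫ ind = μ0
  have hμint : ∫ x, ind x ∂ν = μ0 := by
    rw [hμ0, hind, integral_indicator_const (1 : ℝ) hΩ]
    simp [ν]
    rfl
  -- ∫ g j = μ0
  have hginv : ∀ j x t, g j (Function.update x j t) = g j x := by
    intro j x t
    simp only [hgdef, Function.update_idem]
  have hgint : ∀ j, ∫ x, g j x ∂ν = μ0 := by
    intro j
    rw [← hμint, hν, integral_update_eq d j ind hIndInt]
  -- ∫ ind * g = ∫ g * g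
  have hsq : ∀ j, ∫ x, ind x * g j x ∂ν = ∫ x, g j x * g j x ∂ν := by
    intro j
    have hFm : Measurable fun x => ind x * g j x := hmf.mul (hgm j)
    have hFb : ∀ x, ‖ind x * g j x‖ ≤ 1 := by
      intro x
      rw [norm_mul]
      calc ‖ind x‖ * ‖g j x‖ ≤ 1 * 1 := mul_le_mul (hbf x) (hbg j x) (norm_nonneg _) zero_le_one
        _ = 1 := by ring
    have hFInt : Integrable (fun x => ind x * g j x) ν :=
      integrable_of_bdd hFm.aestronglyMeasurable hFb
    rw [hν, integral_update_eq d j _ hFInt]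
    refine integral_congr_ae (Filter.Eventually.of_forall fun x => ?_)
    have : ∀ t, ind (Function.update x j t) * g j (Function.update x j t)
        = ind (Function.update x j t) * g j x := by
      intro t; rw [hginv]
    simp only [this]
    rw [integral_mul_const]
  -- inner z-integral over ν
  have hinner : ∀ j (x : Fin d → ℝ), ∫ z, ind (Function.update x j (z j)) ∂ν = g j x := by
    intro j x
    have hFm : Measurable fun z : Fin d → ℝ => ind (Function.update x j (z j)) :=
      hmf.comp ((measurable_update x).comp (measurable_pi_apply j))
    have hFInt : Integrable (fun z : Fin d → ℝ => ind (Function.update x j (z j))) ν :=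
      integrable_of_bdd hFm.aestronglyMeasurable fun z => hbf _
    rw [hν, integral_update_eq d j _ hFInt]
    simp only [Function.update_self]
    simp [hgdef]
    rfl
  -- sobolTau computation
  have hTau : ∀ j, sobolTau d ind j = μ0 - ∫ x, g j x * g j x ∂ν := by
    intro j
    have hBm : Measurable fun p : (Fin d → ℝ) × (Fin d → ℝ) =>
        ind (Function.update p.1 j (p.2 j)) :=
      hmf.comp (measurable_update'.comp
        (measurable_fst.prodMk ((measurable_pi_apply j).comp measurable_snd)))
    have hAm : Measurable fun p : (Fin d → ℝ) × (Fin d → ℝ) => ind p.1 :=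
      hmf.comp measurable_fst
    have hAInt : Integrable (fun p : (Fin d → ℝ) × (Fin d → ℝ) => ind p.1) (ν.prod ν) :=
      integrable_of_bdd hAm.aestronglyMeasurable fun p => hbf _
    have hBInt : Integrable (fun p : (Fin d → ℝ) × (Fin d → ℝ) =>
        ind (Function.update p.1 j (p.2 j))) (ν.prod ν) :=
      integrable_of_bdd hBm.aestronglyMeasurable fun p => hbf _
    have hCInt : Integrable (fun p : (Fin d → ℝ) × (Fin d → ℝ) =>
        ind p.1 * ind (Function.update p.1 j (p.2 j))) (ν.prod ν) := by
      refine integrable_of_bdd (hAm.mul hBm).aestronglyMeasurable fun p => ?_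
      rw [norm_mul]
      calc ‖ind p.1‖ * ‖ind (Function.update p.1 j (p.2 j))‖ ≤ 1 * 1 :=
            mul_le_mul (hbf _) (hbf _) (norm_nonneg _) zero_le_one
        _ = 1 := by ring
    have hpt : ∀ p : (Fin d → ℝ) × (Fin d → ℝ),
        (ind p.1 - ind (Function.update p.1 j (p.2 j))) ^ 2
          = ind p.1 + ind (Function.update p.1 j (p.2 j))
            - 2 * (ind p.1 * ind (Function.update p.1 j (p.2 j))) := by
      intro p
      by_cases h1 : p.1 ∈ Ω <;> by_cases h2 : Function.update p.1 j (p.2 j) ∈ Ω <;>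
        simp [ind, h1, h2] <;> norm_num
    have hA : ∫ p, ind p.1 ∂(ν.prod ν) = μ0 := by
      rw [integral_prod _ hAInt]
      simp only [integral_const, Measure.real, measure_univ, ENNReal.toReal_one, one_smul]
      exact hμint
    have hB : ∫ p : (Fin d → ℝ) × (Fin d → ℝ),
        ind (Function.update p.1 j (p.2 j)) ∂(ν.prod ν) = μ0 := by
      rw [integral_prod _ hBInt]
      simp only [hinner j]
      exact hgint j
    have hC : ∫ p : (Fin d → ℝ) × (Fin d → ℝ),
        ind p.1 * ind (Function.update p.1 j (p.2 j)) ∂(ν.prod ν)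
          = ∫ x, g j x * g j x ∂ν := by
      rw [integral_prod _ hCInt]
      have : ∀ x : Fin d → ℝ, ∫ z, ind x * ind (Function.update x j (z j)) ∂ν
          = ind x * g j x := by
        intro x
        rw [integral_const_mul, hinner j]
      simp only [this]
      exact hsq j
    have hsum : Integrable (fun p : (Fin d → ℝ) × (Fin d → ℝ) =>
        ind p.1 + ind (Function.update p.1 j (p.2 j))) (ν.prod ν) := hAInt.add hBInt
    have h2C : Integrable (fun p : (Fin d → ℝ) × (Fin d → ℝ) =>
        2 * (ind p.1 * ind (Function.update p.1 j (p.2 j)))) (ν.prod ν) := hCInt.const_mul 2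
    rw [sobolTau]
    simp only [hpt]
    rw [integral_sub hsum h2C, integral_add hAInt hBInt,
      integral_const_mul, hA, hB, hC]
    ring
  -- complement inner integral
  have hcomp : ∀ j (x : Fin d → ℝ),
      (∫ z, Ωᶜ.indicator (fun _ => (1 : ℝ)) (Function.update x j z) ∂γ) = 1 - g j x := by
    intro j x
    have hpt : ∀ y, Ωᶜ.indicator (fun _ => (1 : ℝ)) y = 1 - ind y := by
      intro y; by_cases hy : y ∈ Ω <;> simp [ind, hy]
    simp only [hpt]
    rw [integral_sub (integrable_const 1) (hIndIntγ j x)]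
    simp [hgdef]
  -- variance
  have hvar : variance ind ν = μ0 * (1 - μ0) := by
    have hmem : MemLp ind 2 ν :=
      memLp_indicator_const 2 hΩ (1 : ℝ) (Or.inr (measure_ne_top _ _))
    have hsq2 : (ind ^ 2) = ind := by
      funext x; by_cases hx : x ∈ Ω <;> simp [ind, hx]
    rw [variance_eq_sub hmem, hsq2, hμint]
    ring
  -- put it together
  rw [meanDim, hvar]
  congr 1
  refine Finset.sum_congr rfl fun j _ => ?_
  rw [hTau j]
  have : ∀ x : Fin d → ℝ,
      (∫ z, ind (Function.update x j z) ∂γ)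
        * (∫ z, Ωᶜ.indicator (fun _ => (1 : ℝ)) (Function.update x j z) ∂γ)
      = g j x - g j x * g j x := by
    intro x
    rw [hcomp j x]
    have : (∫ z, ind (Function.update x j z) ∂γ) = g j x := rfl
    rw [this]; ring
  rw [show (∫ x, (∫ z, Ω.indicator (fun _ => (1 : ℝ)) (Function.update x j z) ∂(gaussianReal 0 1))
        * (∫ z, Ωᶜ.indicator (fun _ => (1 : ℝ)) (Function.update x j z) ∂(gaussianReal 0 1))
        ∂(stdGaussian d))
      = ∫ x, (g j x - g j x * g j x) ∂ν from integral_congr_ae (.of_forall this)]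
  have hgsqInt : Integrable (fun x => g j x * g j x) ν := by
    refine integrable_of_bdd ((hgm j).mul (hgm j)).aestronglyMeasurable fun x => ?_
    rw [norm_mul]
    calc ‖g j x‖ * ‖g j x‖ ≤ 1 * 1 := mul_le_mul (hbg j x) (hbg j x) (norm_nonneg _) zero_le_one
      _ = 1 := by ring
  rw [integral_sub (hgInt j) hgsqInt, hgint j]
end
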